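/- arXiv:0805.0209 — 2 statements merged into one kernel-verified Lean document; each statement's English description precedes it below -/
import Mathlib

section
/- For a bounded subset M of a Banach algebra A, ρ(L_M R_M) = ρ(M)^2, i.e., the joint spectral radius of the family of two-sided multiplication operators {L_a R_b : a, b ∈ M} equals the square of the joint spectral radius of M. -/
open scoped Pointwise

/-- The norm of a bounded set: supremum of the norms of its elements. -/
noncomputable def setNorm {A : Type*} [NormedRing A] (M : Set A) : ℝ :=
  sSup ((fun a => ‖a‖) '' M)

/-- The joint spectral radius of a bounded subset of a normed algebra:
`ρ(M) = inf_n ‖M^n‖^{1/n}`. -/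
noncomputable def jsr {A : Type*} [NormedRing A] (M : Set A) : ℝ :=
  ⨅ n : ℕ+, (setNorm (M ^ (n : ℕ))) ^ ((n : ℝ)⁻¹)

/-- Left multiplication operator `L_a : x ↦ a x`. -/
noncomputable def Lmul {A : Type*} [NormedRing A] [NormedAlgebra ℂ A] (a : A) : A →L[ℂ] A :=
  ContinuousLinearMap.mul ℂ A a

/-- Right multiplication operator `R_b : x ↦ x b`. -/
noncomputable def Rmul {A : Type*} [NormedRing A] [NormedAlgebra ℂ A] (b : A) : A →L[ℂ] A :=
  (ContinuousLinearMap.mul ℂ A).flip b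

/-- The family `L_M R_N = {L_a R_b : a ∈ M, b ∈ N}`. -/
noncomputable def LR {A : Type*} [NormedRing A] [NormedAlgebra ℂ A] (M N : Set A) :
    Set (A →L[ℂ] A) :=
  {T | ∃ a ∈ M, ∃ b ∈ N, T = (Lmul a).comp (Rmul b)}

open Bornology Filter

section SetNormLemmas

variable {B : Type*} [NormedRing B]

lemma setNorm_nonneg' (M : Set B) : 0 ≤ setNorm M :=
  Real.sSup_nonneg (by rintro x ⟨a, _, rfl⟩; exact norm_nonneg a)

lemma norm_le_setNorm' {M : Set B} (h : IsBounded M) {x : B} (hx : x ∈ M) :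
    ‖x‖ ≤ setNorm M := by
  obtain ⟨C, hC⟩ := isBounded_iff_forall_norm_le.1 h
  exact le_csSup ⟨C, by rintro r ⟨a, ha, rfl⟩; exact hC a ha⟩ ⟨x, hx, rfl⟩

lemma setNorm_le' {M : Set B} {C : ℝ} (hC : 0 ≤ C) (h : ∀ x ∈ M, ‖x‖ ≤ C) :
    setNorm M ≤ C :=
  Real.sSup_le (by rintro r ⟨a, ha, rfl⟩; exact h a ha) hC

lemma isBounded_of_norm_le' {M : Set B} {C : ℝ} (h : ∀ x ∈ M, ‖x‖ ≤ C) : IsBounded M :=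
  isBounded_iff_forall_norm_le.2 ⟨C, h⟩

lemma isBounded_mul' {M N : Set B} (hM : IsBounded M) (hN : IsBounded N) :
    IsBounded (M * N) := by
  refine isBounded_of_norm_le' (C := setNorm M * setNorm N) ?_
  rintro x hx
  rw [Set.mem_mul] at hx
  obtain ⟨a, ha, b, hb, rfl⟩ := hx
  exact (norm_mul_le a b).trans
    (mul_le_mul (norm_le_setNorm' hM ha) (norm_le_setNorm' hN hb) (norm_nonneg b)
      (setNorm_nonneg' M))

lemma setNorm_mul_le' {M N : Set B} (hM : IsBounded M) (hN : IsBounded N) :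
    setNorm (M * N) ≤ setNorm M * setNorm N := by
  refine setNorm_le' (mul_nonneg (setNorm_nonneg' M) (setNorm_nonneg' N)) ?_
  rintro x hx
  rw [Set.mem_mul] at hx
  obtain ⟨a, ha, b, hb, rfl⟩ := hx
  exact (norm_mul_le a b).trans
    (mul_le_mul (norm_le_setNorm' hM ha) (norm_le_setNorm' hN hb) (norm_nonneg b)
      (setNorm_nonneg' M))

lemma isBounded_pow' {M : Set B} (hM : IsBounded M) : ∀ n : ℕ, IsBounded (M ^ n)
  | 0 => by
      rw [pow_zero]
      exact isBounded_of_norm_le' (C := ‖(1 : B)‖)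
        (by rintro x hx; rw [Set.mem_one] at hx; subst hx; exact le_rfl)
  | (n + 1) => by
      rw [pow_succ]
      exact isBounded_mul' (isBounded_pow' hM n) hM

lemma setNorm_pow_mul_le' {M : Set B} (hM : IsBounded M) (m n : ℕ) :
    setNorm (M ^ (m + n)) ≤ setNorm (M ^ m) * setNorm (M ^ n) := by
  rw [pow_add]
  exact setNorm_mul_le' (isBounded_pow' hM m) (isBounded_pow' hM n)

lemma setNorm_pow_le_pow' {M : Set B} (hM : IsBounded M) (n : ℕ) :
    ∀ k : ℕ, setNorm (M ^ ((k + 1) * n)) ≤ setNorm (M ^ n) ^ (k + 1)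
  | 0 => by simp
  | (k + 1) => by
      have h1 : (k + 1 + 1) * n = (k + 1) * n + n := by ring
      rw [h1]
      calc setNorm (M ^ ((k + 1) * n + n)) ≤ setNorm (M ^ ((k + 1) * n)) * setNorm (M ^ n) :=
            setNorm_pow_mul_le' hM _ _
        _ ≤ setNorm (M ^ n) ^ (k + 1) * setNorm (M ^ n) :=
            mul_le_mul_of_nonneg_right (setNorm_pow_le_pow' hM n k) (setNorm_nonneg' _)
        _ = setNorm (M ^ n) ^ (k + 1 + 1) := by ring

lemma jsr_nonneg' (M : Set B) : 0 ≤ jsr M :=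
  Real.iInf_nonneg fun _ => Real.rpow_nonneg (setNorm_nonneg' _) _

lemma jsr_le' (M : Set B) {m : ℕ} (hm : 0 < m) :
    jsr M ≤ setNorm (M ^ m) ^ ((m : ℝ)⁻¹) := by
  have h := ciInf_le (f := fun n : ℕ+ => (setNorm (M ^ (n : ℕ))) ^ ((n : ℝ)⁻¹))
    ⟨0, by rintro x ⟨n, rfl⟩; exact Real.rpow_nonneg (setNorm_nonneg' _) _⟩ (⟨m, hm⟩ : ℕ+)
  simpa [jsr] using h

end SetNormLemmas

section LRLemmas

variable {A : Type*} [NormedRing A] [NormedAlgebra ℂ A]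

lemma Lmul_apply' (a x : A) : Lmul a x = a * x := rfl

lemma Rmul_apply' (b x : A) : Rmul b x = x * b := rfl

lemma norm_Lmul_le' (a : A) : ‖Lmul a‖ ≤ ‖a‖ :=
  ContinuousLinearMap.opNorm_mul_apply_le ℂ A a

lemma norm_Rmul_le' (b : A) : ‖Rmul b‖ ≤ ‖b‖ :=
  ContinuousLinearMap.opNorm_le_bound _ (norm_nonneg b) fun x =>
    (norm_mul_le x b).trans_eq (mul_comm _ _)

lemma LR_comp_identity (a b c d : A) :
    (Lmul (a * c)).comp (Rmul (d * b)) =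
      ((Lmul a).comp (Rmul b)).comp ((Lmul c).comp (Rmul d)) := by
  ext x
  simp only [ContinuousLinearMap.comp_apply, Lmul_apply', Rmul_apply']
  noncomm_ring

lemma mem_LR_pow {M N : Set A} :
    ∀ n : ℕ, ∀ T ∈ (LR M N) ^ (n + 1),
      ∃ c ∈ M ^ (n + 1), ∃ d ∈ N ^ (n + 1), T = (Lmul c).comp (Rmul d)
  | 0 => by
      intro T hT
      rw [pow_one] at hT
      obtain ⟨a, ha, b, hb, rfl⟩ := hT
      exact ⟨a, by rwa [pow_one], b, by rwa [pow_one], rfl⟩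
  | (n + 1) => by
      intro T hT
      rw [pow_succ] at hT
      rw [Set.mem_mul] at hT
      obtain ⟨T', hT', t, ht, rfl⟩ := hT
      obtain ⟨c, hc, d, hd, rfl⟩ := mem_LR_pow n T' hT'
      obtain ⟨a, ha, b, hb, rfl⟩ := ht
      refine ⟨c * a, ?_, b * d, ?_, ?_⟩
      · rw [pow_succ]; exact Set.mul_mem_mul hc ha
      · rw [pow_succ']; exact Set.mul_mem_mul hb hd
      · rw [ContinuousLinearMap.mul_def, LR_comp_identity]

lemma LR_pow_mem {M N : Set A} :
    ∀ n : ℕ, ∀ c ∈ M ^ (n + 1), ∀ d ∈ N ^ (n + 1),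
      (Lmul c).comp (Rmul d) ∈ (LR M N) ^ (n + 1)
  | 0 => by
      intro c hc d hd
      rw [pow_one] at hc hd ⊢
      exact ⟨c, hc, d, hd, rfl⟩
  | (n + 1) => by
      intro c hc d hd
      rw [pow_succ] at hc
      rw [pow_succ'] at hd
      rw [Set.mem_mul] at hc hd
      obtain ⟨c₁, hc₁, a, ha, rfl⟩ := hc
      obtain ⟨b, hb, d₁, hd₁, rfl⟩ := hd
      rw [LR_comp_identity c₁ d₁ a b, pow_succ, ← ContinuousLinearMap.mul_def]
      exact Set.mul_mem_mul (LR_pow_mem n c₁ hc₁ d₁ hd₁) ⟨a, ha, b, hb, rfl⟩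

lemma isBounded_LR {M N : Set A} (hM : Bornology.IsBounded M) (hN : Bornology.IsBounded N) :
    Bornology.IsBounded (LR M N) := by
  refine isBounded_of_norm_le' (C := setNorm M * setNorm N) ?_
  rintro T ⟨a, ha, b, hb, rfl⟩
  calc ‖(Lmul a).comp (Rmul b)‖ ≤ ‖Lmul a‖ * ‖Rmul b‖ := ContinuousLinearMap.opNorm_comp_le _ _
    _ ≤ ‖a‖ * ‖b‖ :=
        mul_le_mul (norm_Lmul_le' a) (norm_Rmul_le' b) (norm_nonneg _) (norm_nonneg a)
    _ ≤ setNorm M * setNorm N := mul_le_mul (norm_le_setNorm' hM ha) (norm_le_setNorm' hN hb)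
        (norm_nonneg b) (setNorm_nonneg' M)

lemma setNorm_LR_pow_le {M : Set A} (hM : Bornology.IsBounded M) (n : ℕ) :
    setNorm ((LR M M) ^ (n + 1)) ≤ setNorm (M ^ (n + 1)) * setNorm (M ^ (n + 1)) := by
  refine setNorm_le' (mul_nonneg (setNorm_nonneg' _) (setNorm_nonneg' _)) ?_
  intro T hT
  obtain ⟨c, hc, d, hd, rfl⟩ := mem_LR_pow n T hT
  calc ‖(Lmul c).comp (Rmul d)‖ ≤ ‖Lmul c‖ * ‖Rmul d‖ := ContinuousLinearMap.opNorm_comp_le _ _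
    _ ≤ ‖c‖ * ‖d‖ :=
        mul_le_mul (norm_Lmul_le' c) (norm_Rmul_le' d) (norm_nonneg _) (norm_nonneg c)
    _ ≤ setNorm (M ^ (n + 1)) * setNorm (M ^ (n + 1)) :=
        mul_le_mul (norm_le_setNorm' (isBounded_pow' hM _) hc)
          (norm_le_setNorm' (isBounded_pow' hM _) hd) (norm_nonneg d) (setNorm_nonneg' _)

lemma setNorm_pow_le_LR {M : Set A} (hM : Bornology.IsBounded M) (n : ℕ) :
    setNorm (M ^ ((n + 1) + (n + 1))) ≤ setNorm ((LR M M) ^ (n + 1)) * ‖(1 : A)‖ := by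
  have hLR : Bornology.IsBounded ((LR M M) ^ (n + 1)) :=
    isBounded_pow' (isBounded_LR hM hM) _
  refine setNorm_le' (mul_nonneg (setNorm_nonneg' _) (norm_nonneg _)) ?_
  intro x hx
  rw [pow_add, Set.mem_mul] at hx
  obtain ⟨c, hc, d, hd, rfl⟩ := hx
  have hmem := LR_pow_mem n c hc d hd
  have heval : ((Lmul c).comp (Rmul d)) 1 = c * d := by
    simp [ContinuousLinearMap.comp_apply, Lmul_apply', Rmul_apply']
  calc ‖c * d‖ = ‖((Lmul c).comp (Rmul d)) 1‖ := by rw [heval]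
    _ ≤ ‖(Lmul c).comp (Rmul d)‖ * ‖(1 : A)‖ := ContinuousLinearMap.le_opNorm _ _
    _ ≤ setNorm ((LR M M) ^ (n + 1)) * ‖(1 : A)‖ :=
        mul_le_mul_of_nonneg_right (norm_le_setNorm' hLR hmem) (norm_nonneg _)

end LRLemmas

lemma eps_le_sq {a b : ℝ} (hb : 0 ≤ b) (h : ∀ ε > 0, a ≤ (b + ε) ^ 2) : a ≤ b ^ 2 := by
  by_contra hc
  push_neg at hc
  set ε := min 1 ((a - b ^ 2) / (2 * b + 2)) with hε
  have hεpos : 0 < ε := lt_min one_pos (div_pos (by linarith) (by linarith))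
  have hε1 : ε ≤ 1 := min_le_left _ _
  have hε2 : ε * (2 * b + 2) ≤ a - b ^ 2 := by
    have hle := min_le_right 1 ((a - b ^ 2) / (2 * b + 2))
    calc ε * (2 * b + 2) ≤ ((a - b ^ 2) / (2 * b + 2)) * (2 * b + 2) :=
          mul_le_mul_of_nonneg_right hle (by linarith)
      _ = a - b ^ 2 := by field_simp
  have := h ε hεpos
  nlinarith

lemma eps_le_add' {a b : ℝ} (h : ∀ ε > 0, a ≤ b + ε) : a ≤ b := by
  by_contra hc
  push_neg at hc
  have := h ((a - b) / 2) (by linarith)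
  linarith

/-- `(x ^ r) ^ 2 = x ^ (2 * r)` for `x ≥ 0`. -/
lemma rpow_sq_eq {x : ℝ} (hx : 0 ≤ x) (r : ℝ) : (x ^ r) ^ (2 : ℕ) = x ^ (r * 2) := by
  rw [← Real.rpow_natCast (x ^ r) 2, ← Real.rpow_mul hx]
  norm_num

/-- for a bounded subset `M` of a complex Banach algebra,
`ρ(L_M R_M) = ρ(M)^2`. -/
theorem jsr_LR_eq_sq {A : Type*} [NormedRing A] [NormedAlgebra ℂ A] [CompleteSpace A]
    (M : Set A) (hM : Bornology.IsBounded M) :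
    jsr (LR M M) = (jsr M) ^ 2 := by
  have hLRb : Bornology.IsBounded (LR M M) := isBounded_LR hM hM
  -- upper bound : jsr (LR M M) ≤ jsr M ^ 2
  have upper : jsr (LR M M) ≤ (jsr M) ^ 2 := by
    refine eps_le_sq (jsr_nonneg' M) ?_
    intro ε hε
    have hlt : jsr M < jsr M + ε := by linarith
    obtain ⟨n, hn⟩ := exists_lt_of_ciInf_lt
      (f := fun n : ℕ+ => (setNorm (M ^ (n : ℕ))) ^ ((n : ℝ)⁻¹)) hlt
    obtain ⟨m, hm⟩ : ∃ m : ℕ, (n : ℕ) = m + 1 :=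
      ⟨(n : ℕ) - 1, (Nat.succ_pred_eq_of_pos n.pos).symm⟩
    have key : jsr (LR M M) ≤ ((setNorm (M ^ (n : ℕ))) ^ ((n : ℝ)⁻¹)) ^ 2 := by
      have h1 : jsr (LR M M) ≤ setNorm ((LR M M) ^ (n : ℕ)) ^ ((n : ℝ)⁻¹) :=
        jsr_le' _ n.pos
      have h2 : setNorm ((LR M M) ^ (n : ℕ)) ≤ setNorm (M ^ (n : ℕ)) * setNorm (M ^ (n : ℕ)) := by
        rw [hm]; exact setNorm_LR_pow_le hM m
      have h3 : setNorm ((LR M M) ^ (n : ℕ)) ^ ((n : ℝ)⁻¹) ≤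
          (setNorm (M ^ (n : ℕ)) * setNorm (M ^ (n : ℕ))) ^ ((n : ℝ)⁻¹) :=
        Real.rpow_le_rpow (setNorm_nonneg' _) h2 (by positivity)
      have h4 : (setNorm (M ^ (n : ℕ)) * setNorm (M ^ (n : ℕ))) ^ ((n : ℝ)⁻¹) =
          ((setNorm (M ^ (n : ℕ))) ^ ((n : ℝ)⁻¹)) ^ 2 := by
        rw [Real.mul_rpow (setNorm_nonneg' _) (setNorm_nonneg' _), sq]
      linarith [h1, h3, h4.le, h4.ge]
    calc jsr (LR M M) ≤ ((setNorm (M ^ (n : ℕ))) ^ ((n : ℝ)⁻¹)) ^ 2 := key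
      _ ≤ (jsr M + ε) ^ 2 :=
          pow_le_pow_left₀ (Real.rpow_nonneg (setNorm_nonneg' _) _) hn.le 2
  -- the key estimate for the lower bound
  have Est : ∀ m : ℕ, 0 < m → (jsr M) ^ 2 ≤
      setNorm ((LR M M) ^ m) ^ ((m : ℝ)⁻¹) * ‖(1 : A)‖ ^ ((m : ℝ)⁻¹) := by
    intro m hm
    obtain ⟨m₀, rfl⟩ : ∃ m₀ : ℕ, m = m₀ + 1 := ⟨m - 1, (Nat.succ_pred_eq_of_pos hm).symm⟩
    have h2m : jsr M ≤ setNorm (M ^ ((m₀ + 1) + (m₀ + 1))) ^ ((((m₀ + 1) + (m₀ + 1) : ℕ) : ℝ)⁻¹) :=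
      jsr_le' _ (by omega)
    have hsq : (jsr M) ^ 2 ≤
        (setNorm (M ^ ((m₀ + 1) + (m₀ + 1))) ^ ((((m₀ + 1) + (m₀ + 1) : ℕ) : ℝ)⁻¹)) ^ 2 :=
      pow_le_pow_left₀ (jsr_nonneg' M) h2m 2
    have hexp : (setNorm (M ^ ((m₀ + 1) + (m₀ + 1))) ^ ((((m₀ + 1) + (m₀ + 1) : ℕ) : ℝ)⁻¹)) ^ 2 =
        setNorm (M ^ ((m₀ + 1) + (m₀ + 1))) ^ (((m₀ + 1 : ℕ) : ℝ)⁻¹) := by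
      rw [rpow_sq_eq (setNorm_nonneg' _)]
      congr 1
      push_cast
      have : ((m₀ : ℝ) + 1) ≠ 0 := by positivity
      field_simp
      ring
    have hbound : setNorm (M ^ ((m₀ + 1) + (m₀ + 1))) ^ (((m₀ + 1 : ℕ) : ℝ)⁻¹) ≤
        (setNorm ((LR M M) ^ (m₀ + 1)) * ‖(1 : A)‖) ^ (((m₀ + 1 : ℕ) : ℝ)⁻¹) :=
      Real.rpow_le_rpow (setNorm_nonneg' _) (setNorm_pow_le_LR hM m₀) (by positivity)
    have hmul : (setNorm ((LR M M) ^ (m₀ + 1)) * ‖(1 : A)‖) ^ (((m₀ + 1 : ℕ) : ℝ)⁻¹) =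
        setNorm ((LR M M) ^ (m₀ + 1)) ^ (((m₀ + 1 : ℕ) : ℝ)⁻¹) *
          ‖(1 : A)‖ ^ (((m₀ + 1 : ℕ) : ℝ)⁻¹) :=
      Real.mul_rpow (setNorm_nonneg' _) (norm_nonneg _)
    calc (jsr M) ^ 2 ≤ _ := hsq
      _ = setNorm (M ^ ((m₀ + 1) + (m₀ + 1))) ^ (((m₀ + 1 : ℕ) : ℝ)⁻¹) := hexp
      _ ≤ (setNorm ((LR M M) ^ (m₀ + 1)) * ‖(1 : A)‖) ^ (((m₀ + 1 : ℕ) : ℝ)⁻¹) := hbound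
      _ = _ := hmul
  -- lower bound : jsr M ^ 2 ≤ jsr (LR M M)
  have lower : (jsr M) ^ 2 ≤ jsr (LR M M) := by
    by_cases hone : ‖(1 : A)‖ = 0
    · have h0 := Est 1 one_pos
      rw [hone] at h0
      have : (0 : ℝ) ^ (((1 : ℕ) : ℝ)⁻¹) = 0 := by
        rw [Real.zero_rpow (by norm_num)]
      rw [this, mul_zero] at h0
      exact h0.trans (jsr_nonneg' _)
    · have hone' : 0 < ‖(1 : A)‖ := (norm_nonneg _).lt_of_ne' hone
      refine eps_le_add' ?_
      intro ε hε
      have hlt : jsr (LR M M) < jsr (LR M M) + ε := by linarith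
      obtain ⟨n, hn⟩ := exists_lt_of_ciInf_lt
        (f := fun n : ℕ+ => (setNorm ((LR M M) ^ (n : ℕ))) ^ ((n : ℝ)⁻¹)) hlt
      -- submultiplicativity along multiples of n
      have sub : ∀ k : ℕ,
          setNorm ((LR M M) ^ ((k + 1) * (n : ℕ))) ^ ((((k + 1) * (n : ℕ) : ℕ) : ℝ)⁻¹) ≤
            setNorm ((LR M M) ^ (n : ℕ)) ^ (((n : ℕ) : ℝ)⁻¹) := by
        intro k
        have h1 : setNorm ((LR M M) ^ ((k + 1) * (n : ℕ))) ≤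
            setNorm ((LR M M) ^ (n : ℕ)) ^ (k + 1) :=
          setNorm_pow_le_pow' hLRb (n : ℕ) k
        have h2 := Real.rpow_le_rpow (setNorm_nonneg' _) h1
          (by positivity : (0:ℝ) ≤ (((k + 1) * (n : ℕ) : ℕ) : ℝ)⁻¹)
        refine h2.trans_eq ?_
        rw [← Real.rpow_natCast (setNorm ((LR M M) ^ (n : ℕ))) (k + 1),
          ← Real.rpow_mul (setNorm_nonneg' _)]
        congr 1
        push_cast
        have hk : ((k : ℝ) + 1) ≠ 0 := by positivity
        have hn0 : ((n : ℕ) : ℝ) ≠ 0 := by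
          exact_mod_cast n.pos.ne'
        field_simp
      have hbound : ∀ k : ℕ, (jsr M) ^ 2 ≤
          (jsr (LR M M) + ε) * ‖(1 : A)‖ ^ ((((k + 1) * (n : ℕ) : ℕ) : ℝ)⁻¹) := by
        intro k
        have hpos : 0 < (k + 1) * (n : ℕ) := by positivity
        have h1 := Est ((k + 1) * (n : ℕ)) hpos
        have h2 : setNorm ((LR M M) ^ ((k + 1) * (n : ℕ))) ^ ((((k + 1) * (n : ℕ) : ℕ) : ℝ)⁻¹) ≤
            jsr (LR M M) + ε := (sub k).trans hn.le
        calc (jsr M) ^ 2 ≤ _ := h1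
          _ ≤ (jsr (LR M M) + ε) * ‖(1 : A)‖ ^ ((((k + 1) * (n : ℕ) : ℕ) : ℝ)⁻¹) :=
            mul_le_mul_of_nonneg_right h2 (Real.rpow_nonneg (norm_nonneg _) _)
      -- take the limit k → ∞
      have ht0 : Tendsto (fun k : ℕ => ((((k + 1) * (n : ℕ) : ℕ) : ℝ))⁻¹) atTop (nhds 0) := by
        apply tendsto_inv_atTop_zero.comp
        apply tendsto_atTop_mono (fun k => ?_) tendsto_natCast_atTop_atTop
        have : k ≤ (k + 1) * (n : ℕ) :=
          le_trans (Nat.le_succ k) (Nat.le_mul_of_pos_right _ n.pos)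
        exact_mod_cast this
      have hT : Tendsto
          (fun k : ℕ => (jsr (LR M M) + ε) * ‖(1 : A)‖ ^ ((((k + 1) * (n : ℕ) : ℕ) : ℝ)⁻¹))
          atTop (nhds ((jsr (LR M M) + ε) * 1)) := by
        have hc : Tendsto (fun k : ℕ => ‖(1 : A)‖ ^ ((((k + 1) * (n : ℕ) : ℕ) : ℝ)⁻¹))
            atTop (nhds (‖(1 : A)‖ ^ (0 : ℝ))) :=
          ((Real.continuousAt_const_rpow hone).tendsto).comp ht0
        rw [Real.rpow_zero] at hc
        exact tendsto_const_nhds.mul hc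
      rw [mul_one] at hT
      exact ge_of_tendsto hT (Filter.Eventually.of_forall hbound)
  linarith
end

section
/- For a bounded subset M of a Banach algebra A, the Berger–Wang radius satisfies r(L_M R_M) = r(M)^2, where r(S) = limsup_n (sup{ρ(a) : a ∈ S^n})^{1/n} and ρ(a) denotes the spectral radius of a single element (or operator). -/
open scoped Pointwise
open Filter

/-- The Berger–Wang radius of a bounded subset `M` of a complex Banach algebra:
`r(M) = limsup_n (sup {ρ(a) : a ∈ M^n})^{1/n}`, where `ρ(a)` is the ordinary
spectral radius of a single element. -/
noncomputable def bwr {A : Type*} [NormedRing A] [NormedAlgebra ℂ A] (M : Set A) : ℝ :=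
  limsup (fun n : ℕ =>
    (sSup ((fun a => (spectralRadius ℂ a).toReal) '' (M ^ n))) ^ ((n : ℝ)⁻¹)) atTop

section Aux

open scoped ENNReal Topology

variable {A : Type*} [NormedRing A] [NormedAlgebra ℂ A]

lemma LRop_apply (a b x : A) : ((Lmul a).comp (Rmul b)) x = a * (x * b) := rfl

lemma LRop_mul (a b c d : A) :
    ((Lmul a).comp (Rmul b)) * ((Lmul c).comp (Rmul d)) = (Lmul (a*c)).comp (Rmul (d*b)) := by
  ext x
  simp only [ContinuousLinearMap.mul_apply, ContinuousLinearMap.coe_comp', Function.comp_apply]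
  simp [Lmul, Rmul, mul_assoc]

lemma LRop_pow (u v : A) (k : ℕ) :
    ((Lmul u).comp (Rmul v)) ^ k = (Lmul (u^k)).comp (Rmul (v^k)) := by
  induction k with
  | zero => ext x; simp [LRop_apply, Lmul, Rmul]
  | succ k ih => rw [pow_succ, ih, LRop_mul, ← pow_succ, ← pow_succ']

lemma LRop_norm_le (a b : A) : ‖(Lmul a).comp (Rmul b)‖ ≤ ‖a‖ * ‖b‖ := by
  refine ContinuousLinearMap.opNorm_le_bound _ (mul_nonneg (norm_nonneg a) (norm_nonneg b)) ?_
  intro x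
  rw [LRop_apply]
  calc ‖a * (x * b)‖ ≤ ‖a‖ * ‖x * b‖ := norm_mul_le _ _
    _ ≤ ‖a‖ * (‖x‖ * ‖b‖) := by gcongr; exact norm_mul_le _ _
    _ = ‖a‖ * ‖b‖ * ‖x‖ := by ring

lemma LR_mul (P Q R S : Set A) : LR P Q * LR R S = LR (P * R) (S * Q) := by
  ext T
  constructor
  · rintro ⟨T₁, hT₁, T₂, hT₂, rfl⟩
    obtain ⟨a, ha, b, hb, rfl⟩ := hT₁
    obtain ⟨c, hc, d, hd, rfl⟩ := hT₂
    exact ⟨a * c, Set.mul_mem_mul ha hc, d * b, Set.mul_mem_mul hd hb, LRop_mul a b c d⟩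
  · rintro ⟨x, hx, y, hy, rfl⟩
    obtain ⟨a, ha, c, hc, rfl⟩ := hx
    obtain ⟨d, hd, b, hb, rfl⟩ := hy
    exact ⟨(Lmul a).comp (Rmul b), ⟨a, ha, b, hb, rfl⟩,
      (Lmul c).comp (Rmul d), ⟨c, hc, d, hd, rfl⟩, LRop_mul a b c d⟩

lemma LR_pow (M : Set A) (n : ℕ) : (LR M M) ^ (n + 1) = LR (M ^ (n + 1)) (M ^ (n + 1)) := by
  induction n with
  | zero => simp
  | succ n ih =>
    rw [pow_succ (LR M M) (n+1), ih, LR_mul, ← pow_succ, ← pow_succ']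

variable [CompleteSpace A]

lemma srad_ne_top (a : A) : spectralRadius ℂ a ≠ ∞ := by
  refine ne_top_of_le_ne_top ?_ (spectrum.spectralRadius_le_pow_nnnorm_pow_one_div ℂ a 0)
  simp only [pow_one, Nat.cast_zero, zero_add, Nat.cast_one, one_div_one, ENNReal.rpow_one]
  exact ENNReal.mul_ne_top ENNReal.coe_ne_top ENNReal.coe_ne_top

lemma srad_le (a : A) : spectralRadius ℂ a ≤ (‖a‖₊ : ℝ≥0∞) * ‖(1:A)‖₊ := by
  have := spectrum.spectralRadius_le_pow_nnnorm_pow_one_div ℂ a 0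
  simpa using this

lemma rhoT_nonneg (a : A) : 0 ≤ (spectralRadius ℂ a).toReal := ENNReal.toReal_nonneg

lemma rhoT_le_norm (a : A) : (spectralRadius ℂ a).toReal ≤ ‖a‖ * ‖(1:A)‖ := by
  have h := ENNReal.toReal_mono (ENNReal.mul_ne_top ENNReal.coe_ne_top ENNReal.coe_ne_top)
    (srad_le a)
  simpa [ENNReal.toReal_mul] using h

lemma srad_LR_le (u v : A) :
    spectralRadius ℂ ((Lmul u).comp (Rmul v)) ≤ spectralRadius ℂ u * spectralRadius ℂ v := by
  have hT := spectrum.pow_nnnorm_pow_one_div_tendsto_nhds_spectralRadius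
      ((Lmul u).comp (Rmul v))
  have hu := spectrum.pow_nnnorm_pow_one_div_tendsto_nhds_spectralRadius u
  have hv := spectrum.pow_nnnorm_pow_one_div_tendsto_nhds_spectralRadius v
  have hmul : Tendsto (fun n : ℕ => (‖u ^ n‖₊ : ℝ≥0∞) ^ (1 / n : ℝ) *
      (‖v ^ n‖₊ : ℝ≥0∞) ^ (1 / n : ℝ)) atTop
      (𝓝 (spectralRadius ℂ u * spectralRadius ℂ v)) :=
    ENNReal.Tendsto.mul hu (Or.inr (srad_ne_top v)) hv (Or.inr (srad_ne_top u))
  refine le_of_tendsto_of_tendsto' hT hmul ?_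
  intro n
  rw [LRop_pow]
  rw [← ENNReal.mul_rpow_of_nonneg _ _ (by positivity : (0:ℝ) ≤ 1 / n)]
  refine ENNReal.rpow_le_rpow ?_ (by positivity)
  rw [← ENNReal.coe_mul]
  exact_mod_cast (LRop_norm_le (u ^ n) (v ^ n)).trans_eq rfl

lemma sq_srad_le (u : A) :
    spectralRadius ℂ u ^ 2 ≤ spectralRadius ℂ ((Lmul u).comp (Rmul u)) := by
  rcases subsingleton_or_nontrivial A with hA | hA
  · simp [spectrum.SpectralRadius.of_subsingleton]
  set T := (Lmul u).comp (Rmul u) with hTdef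
  have key : ∀ k : ℕ, (‖u ^ (2*k)‖₊ : ℝ≥0∞) ≤ (‖T ^ k‖₊ : ℝ≥0∞) * ‖(1:A)‖₊ := by
    intro k
    have hap : (T ^ k) 1 = u ^ (2*k) := by
      rw [hTdef, LRop_pow, LRop_apply, one_mul, ← pow_add, two_mul]
    calc (‖u ^ (2*k)‖₊ : ℝ≥0∞) = ‖(T ^ k) 1‖₊ := by rw [hap]
      _ ≤ (‖T ^ k‖₊ : ℝ≥0∞) * ‖(1:A)‖₊ := by
          exact_mod_cast ContinuousLinearMap.le_opNNNorm (T ^ k) 1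
  have hu := spectrum.pow_nnnorm_pow_one_div_tendsto_nhds_spectralRadius u
  have hT := spectrum.pow_nnnorm_pow_one_div_tendsto_nhds_spectralRadius T
  have h2k : Tendsto (fun k : ℕ => 2 * k) atTop atTop :=
    Filter.tendsto_atTop_atTop.mpr fun b => ⟨b, fun a ha => by omega⟩
  have ha : Tendsto (fun k : ℕ => (‖u ^ (2*k)‖₊ : ℝ≥0∞) ^ (1 / (2*k : ℕ) : ℝ)) atTop
      (𝓝 (spectralRadius ℂ u)) := hu.comp h2k
  have hb : Tendsto (fun k : ℕ => ((‖u ^ (2*k)‖₊ : ℝ≥0∞) ^ (1 / (2*k : ℕ) : ℝ)) ^ 2) atTop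
      (𝓝 (spectralRadius ℂ u ^ 2)) :=
    ((ENNReal.continuous_pow 2).continuousAt.tendsto).comp ha
  have hbeq : ∀ k : ℕ, ((‖u ^ (2*k)‖₊ : ℝ≥0∞) ^ (1 / (2*k : ℕ) : ℝ)) ^ 2
      = (‖u ^ (2*k)‖₊ : ℝ≥0∞) ^ (1 / (k : ℕ) : ℝ) := by
    intro k
    rw [← ENNReal.rpow_natCast ((‖u ^ (2*k)‖₊ : ℝ≥0∞) ^ (1 / (2*k : ℕ) : ℝ)) 2,
      ← ENNReal.rpow_mul]
    congr 1
    rcases eq_or_ne (k : ℝ) 0 with h | h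
    · push_cast [h]
      simp
    · push_cast
      field_simp
  have h1pos : (0:ℝ) < ‖(1:A)‖ := by
    have : (1:A) ≠ 0 := one_ne_zero
    simpa [norm_pos_iff] using this
  have h1lim : Tendsto (fun k : ℕ => (‖(1:A)‖₊ : ℝ≥0∞) ^ (1 / (k : ℕ) : ℝ)) atTop (𝓝 1) := by
    have hr : Tendsto (fun k : ℕ => (1 / (k : ℕ) : ℝ)) atTop (𝓝 0) :=
      tendsto_one_div_atTop_nhds_zero_nat
    have hc : Tendsto (fun k : ℕ => ‖(1:A)‖ ^ (1 / (k : ℕ) : ℝ)) atTop (𝓝 1) := by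
      have := (Real.continuousAt_const_rpow (a := ‖(1:A)‖) (b := 0) h1pos.ne').tendsto.comp hr
      simpa [Function.comp_def] using this
    have := (ENNReal.continuous_ofReal.tendsto 1).comp hc
    simp only [ENNReal.ofReal_one] at this
    convert this using 2 with k
    rw [Function.comp_apply, ← ENNReal.ofReal_rpow_of_pos h1pos, ofReal_norm, enorm_eq_nnnorm]
  have hc : Tendsto (fun k : ℕ => (‖T ^ k‖₊ : ℝ≥0∞) ^ (1 / (k : ℕ) : ℝ) *
      (‖(1:A)‖₊ : ℝ≥0∞) ^ (1 / (k : ℕ) : ℝ)) atTop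
      (𝓝 (spectralRadius ℂ T * 1)) :=
    ENNReal.Tendsto.mul hT (Or.inr ENNReal.one_ne_top) h1lim (Or.inl one_ne_zero)
  rw [← mul_one (spectralRadius ℂ T)]
  refine le_of_tendsto_of_tendsto' hb hc ?_
  intro k
  rw [hbeq k, ← ENNReal.mul_rpow_of_nonneg _ _ (by positivity : (0:ℝ) ≤ 1 / (k:ℕ))]
  exact ENNReal.rpow_le_rpow (key k) (by positivity)

lemma rhoT_LR_le (u v : A) :
    (spectralRadius ℂ ((Lmul u).comp (Rmul v))).toReal ≤
      (spectralRadius ℂ u).toReal * (spectralRadius ℂ v).toReal := by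
  have h := ENNReal.toReal_mono (ENNReal.mul_ne_top (srad_ne_top u) (srad_ne_top v))
    (srad_LR_le u v)
  simpa [ENNReal.toReal_mul] using h

lemma sq_rhoT_le (u : A) :
    (spectralRadius ℂ u).toReal ^ 2 ≤ (spectralRadius ℂ ((Lmul u).comp (Rmul u))).toReal := by
  have h := ENNReal.toReal_mono (srad_ne_top ((Lmul u).comp (Rmul u))) (sq_srad_le u)
  simpa [ENNReal.toReal_pow] using h

/-- The key supremum identity: for a norm-bounded set `P`,
`sup ρ (L_P R_P) = (sup ρ P)²`. -/
lemma sup_LR_eq (P : Set A) (B : ℝ) (hB0 : 0 ≤ B) (hB : ∀ u ∈ P, ‖u‖ ≤ B) :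
    sSup ((fun T => (spectralRadius ℂ T).toReal) '' LR P P)
      = (sSup ((fun a => (spectralRadius ℂ a).toReal) '' P)) ^ 2 := by
  rcases P.eq_empty_or_nonempty with rfl | hne
  · have : LR (∅ : Set A) ∅ = ∅ := by
      ext T; simp [LR]
    simp [this, Real.sSup_empty]
  set ρ : A → ℝ := fun a => (spectralRadius ℂ a).toReal with hρ
  set ρ' : (A →L[ℂ] A) → ℝ := fun T => (spectralRadius ℂ T).toReal with hρ'
  have bddP : BddAbove (ρ '' P) := by
    refine ⟨B * ‖(1:A)‖, ?_⟩
    rintro _ ⟨u, hu, rfl⟩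
    exact (rhoT_le_norm u).trans (mul_le_mul_of_nonneg_right (hB u hu) (norm_nonneg _))
  have bddLR : BddAbove (ρ' '' LR P P) := by
    refine ⟨B * B, ?_⟩
    rintro _ ⟨T, ⟨u, hu, v, hv, rfl⟩, rfl⟩
    have h1 : ρ' ((Lmul u).comp (Rmul v)) ≤ ‖(Lmul u).comp (Rmul v)‖ * ‖(1 : A →L[ℂ] A)‖ :=
      rhoT_le_norm _
    have h2 : ‖(1 : A →L[ℂ] A)‖ ≤ 1 := by
      rw [ContinuousLinearMap.one_def]; exact ContinuousLinearMap.norm_id_le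
    calc ρ' ((Lmul u).comp (Rmul v)) ≤ ‖(Lmul u).comp (Rmul v)‖ * 1 := by
          refine h1.trans ?_
          exact mul_le_mul_of_nonneg_left h2 (norm_nonneg _)
      _ = ‖(Lmul u).comp (Rmul v)‖ := mul_one _
      _ ≤ ‖u‖ * ‖v‖ := LRop_norm_le u v
      _ ≤ B * B := mul_le_mul (hB u hu) (hB v hv) (norm_nonneg _) hB0
  set s := sSup (ρ '' P) with hs
  set Tn := sSup (ρ' '' LR P P) with hTn
  have hs0 : 0 ≤ s := Real.sSup_nonneg (by rintro _ ⟨u, _, rfl⟩; exact rhoT_nonneg u)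
  have hTn0 : 0 ≤ Tn := Real.sSup_nonneg (by rintro _ ⟨T, _, rfl⟩; exact rhoT_nonneg T)
  apply le_antisymm
  · refine Real.sSup_le ?_ (by positivity)
    rintro _ ⟨T, ⟨u, hu, v, hv, rfl⟩, rfl⟩
    calc ρ' ((Lmul u).comp (Rmul v)) ≤ ρ u * ρ v := rhoT_LR_le u v
      _ ≤ s * s := mul_le_mul (le_csSup bddP ⟨u, hu, rfl⟩) (le_csSup bddP ⟨v, hv, rfl⟩)
          (rhoT_nonneg v) hs0
      _ = s ^ 2 := (sq s).symm
  · have h1 : ∀ u ∈ P, ρ u ≤ Real.sqrt Tn := by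
      intro u hu
      have h2 : ρ u ^ 2 ≤ Tn :=
        (sq_rhoT_le u).trans (le_csSup bddLR ⟨_, ⟨u, hu, u, hu, rfl⟩, rfl⟩)
      exact (Real.le_sqrt (rhoT_nonneg u) hTn0).mpr h2
    have h3 : s ≤ Real.sqrt Tn := by
      refine Real.sSup_le ?_ (Real.sqrt_nonneg _)
      rintro _ ⟨u, hu, rfl⟩
      exact h1 u hu
    calc s ^ 2 ≤ Real.sqrt Tn ^ 2 := by gcongr
      _ = Tn := Real.sq_sqrt hTn0

end Aux

/-- for a bounded subset `M` of a complex Banach algebra,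
`r(L_M R_M) = r(M)^2`. -/
theorem bwr_LR_eq_sq {A : Type*} [NormedRing A] [NormedAlgebra ℂ A] [CompleteSpace A]
    (M : Set A) (hM : Bornology.IsBounded M) :
    bwr (LR M M) = (bwr M) ^ 2 := by
  classical
  obtain ⟨C₀, hC₀⟩ := hM.exists_norm_le
  set C : ℝ := max C₀ 0 with hCdef
  have hC0 : 0 ≤ C := le_max_right _ _
  have hC : ∀ a ∈ M, ‖a‖ ≤ C := fun a ha => (hC₀ a ha).trans (le_max_left _ _)
  -- norm bound on powers of M
  have hpow : ∀ n : ℕ, ∀ u ∈ M ^ (n + 1), ‖u‖ ≤ C ^ (n + 1) := by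
    intro n
    induction n with
    | zero => intro u hu; rw [pow_one] at hu ⊢; exact hC u hu
    | succ n ih =>
      intro u hu
      rw [pow_succ] at hu
      obtain ⟨v, hv, a, ha, rfl⟩ := hu
      calc ‖v * a‖ ≤ ‖v‖ * ‖a‖ := norm_mul_le _ _
        _ ≤ C ^ (n + 1) * C := mul_le_mul (ih v hv) (hC a ha) (norm_nonneg _)
            (by positivity)
        _ = C ^ (n + 2) := by ring
  set ρ : A → ℝ := fun a => (spectralRadius ℂ a).toReal with hρ
  set g : ℕ → ℝ := fun n => sSup (ρ '' (M ^ n)) with hg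
  set G : ℕ → ℝ := fun n => (g n) ^ ((n : ℝ)⁻¹) with hG
  have hg0 : ∀ n, 0 ≤ g n := fun n =>
    Real.sSup_nonneg (by rintro _ ⟨u, _, rfl⟩; exact rhoT_nonneg u)
  have hG0 : ∀ n, 0 ≤ G n := fun n => Real.rpow_nonneg (hg0 n) _
  -- the key pointwise identity for n ≥ 1
  have key : ∀ n : ℕ,
      sSup ((fun T => (spectralRadius ℂ T).toReal) '' ((LR M M) ^ (n + 1)))
        = g (n + 1) ^ 2 := by
    intro n
    rw [LR_pow M n]
    exact sup_LR_eq (M ^ (n + 1)) (C ^ (n + 1)) (by positivity) (hpow n)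
  -- boundedness of G
  set D : ℝ := max ‖(1 : A)‖ 1 with hDdef
  have hD1 : (1:ℝ) ≤ D := le_max_right _ _
  have hD0 : 0 ≤ D := zero_le_one.trans hD1
  have hGbound : ∀ n : ℕ, 1 ≤ n → G n ≤ C * D := by
    intro n hn
    have hgle : g n ≤ (C * D) ^ n := by
      refine Real.sSup_le ?_ (by positivity)
      rintro _ ⟨u, hu, rfl⟩
      obtain ⟨m, rfl⟩ : ∃ m, n = m + 1 := ⟨n - 1, by omega⟩
      calc ρ u ≤ ‖u‖ * ‖(1:A)‖ := rhoT_le_norm u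
        _ ≤ C ^ (m+1) * D ^ (m+1) := by
            refine mul_le_mul (hpow m u hu) ?_ (norm_nonneg _) (by positivity)
            exact (le_max_left _ _).trans (le_self_pow₀ hD1 (by omega))
        _ = (C * D) ^ (m+1) := (mul_pow C D (m+1)).symm
    calc G n = (g n) ^ ((n : ℝ)⁻¹) := rfl
      _ ≤ ((C * D) ^ n) ^ ((n : ℝ)⁻¹) :=
          Real.rpow_le_rpow (hg0 n) hgle (by positivity)
      _ = C * D := Real.pow_rpow_inv_natCast (by positivity) (by omega)
  have hbddAbove : IsBoundedUnder (· ≤ ·) atTop G := by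
    refine ⟨C * D, ?_⟩
    rw [eventually_map]
    filter_upwards [eventually_ge_atTop 1] with n hn
    exact hGbound n hn
  have hbddBelow : IsBoundedUnder (· ≥ ·) atTop G :=
    ⟨0, by rw [eventually_map]; filter_upwards with n; exact hG0 n⟩
  have hcobdd : IsCoboundedUnder (· ≤ ·) atTop G :=
    hbddBelow.isCoboundedUnder_le
  -- the monotone squaring map
  set φ : ℝ → ℝ := fun x => (max x 0) ^ 2 with hφ
  have hφmono : Monotone φ := fun x y h => by
    dsimp only [φ]
    have : max x 0 ≤ max y 0 := max_le_max h le_rfl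
    exact pow_le_pow_left₀ (le_max_right x 0) this 2
  have hφcont : ContinuousAt φ (limsup G atTop) :=
    ((continuous_id.max continuous_const).pow 2).continuousAt
  have hmap := hφmono.map_limsup_of_continuousAt G hφcont hbddAbove hcobdd
  -- limsup G ≥ 0
  have hlims0 : 0 ≤ limsup G atTop :=
    le_limsup_of_frequently_le (Frequently.of_forall fun n => hG0 n) hbddAbove
  have hφval : φ (limsup G atTop) = (limsup G atTop) ^ 2 := by
    dsimp only [φ]; rw [max_eq_left hlims0]
  -- identify bwr (LR M M) with limsup (φ ∘ G)
  have hbwrLR : bwr (LR M M) = limsup (φ ∘ G) atTop := by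
    rw [bwr]
    refine limsup_congr ?_
    filter_upwards [eventually_ge_atTop 1] with n hn
    obtain ⟨m, rfl⟩ : ∃ m, n = m + 1 := ⟨n - 1, by omega⟩
    rw [key m]
    have hgn := hg0 (m + 1)
    have h1 : (g (m+1) ^ 2) ^ (((m+1 : ℕ) : ℝ)⁻¹)
        = (g (m+1) ^ (((m+1 : ℕ) : ℝ)⁻¹)) ^ 2 := by
      rw [← Real.rpow_natCast (g (m+1)) 2, ← Real.rpow_mul hgn,
        ← Real.rpow_natCast (g (m+1) ^ (((m+1 : ℕ) : ℝ)⁻¹)) 2,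
        ← Real.rpow_mul hgn, mul_comm]
    rw [h1]
    have : φ (G (m+1)) = (G (m+1)) ^ 2 := by
      dsimp only [φ]; rw [max_eq_left (hG0 (m+1))]
    rw [Function.comp_apply, this]
  have hbwrM : bwr M = limsup G atTop := rfl
  rw [hbwrLR, ← hmap, hφval, hbwrM]
end
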